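/- With L, R, D as in the gate-dependent-noise theorem and Δ_G := 𝓖̃ − L𝓖R, for any j ≥ 2 and any Ĝ the fully averaged operator E_{G_1,...,G_m}[𝓖̃_inv 𝓖̃_m ⋯ 𝓖̃_{j+1} L 𝓖_j R Δ_{G_{j-1}} ⋯ Δ_{G_1 Ĝ}] equals zero. -/
import Mathlib


open Matrix

section Aux

variable {n : ℕ} {G : Type*} [Group G] [Fintype G]
  (φ : G →* Matrix (Fin n) (Fin n) ℝ)
  (φt : G → Matrix (Fin n) (Fin n) ℝ)
  (L R D : Matrix (Fin n) (Fin n) ℝ)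
  (Δ : G → Matrix (Fin n) (Fin n) ℝ)

lemma aux_key1
    (hR : (Fintype.card G : ℝ)⁻¹ • ∑ g : G, φ g⁻¹ * R * φt g = D * R)
    (hRL : (Fintype.card G : ℝ)⁻¹ • ∑ g : G, φ g * (R * L) * φ g⁻¹ = D)
    (hΔ : ∀ g, Δ g = φt g - L * φ g * R) :
    ∑ g : G, φ g⁻¹ * R * Δ g = 0 := by
  have hc : (Fintype.card G : ℝ) ≠ 0 := Nat.cast_ne_zero.2 Fintype.card_ne_zero
  have h1 : ∑ g : G, φ g⁻¹ * R * φt g = (Fintype.card G : ℝ) • (D * R) := by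
    rw [← hR, smul_smul, mul_inv_cancel₀ hc, one_smul]
  have h2 : ∑ g : G, φ g⁻¹ * (R * L) * φ g = (Fintype.card G : ℝ) • D := by
    rw [← hRL, smul_smul, mul_inv_cancel₀ hc, one_smul]
    exact Fintype.sum_equiv (Equiv.inv G) _ _ (fun g => by simp)
  have expand : ∀ g : G, φ g⁻¹ * R * Δ g
      = φ g⁻¹ * R * φt g - (φ g⁻¹ * (R * L) * φ g) * R := by
    intro g; rw [hΔ]; noncomm_ring
  calc ∑ g : G, φ g⁻¹ * R * Δ g
      = (∑ g : G, φ g⁻¹ * R * φt g) - (∑ g : G, φ g⁻¹ * (R * L) * φ g) * R := by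
        rw [Finset.sum_mul, ← Finset.sum_sub_distrib]
        exact Finset.sum_congr rfl fun g _ => expand g
    _ = 0 := by rw [h1, h2, smul_mul_assoc, sub_self]

lemma aux_key2
    (hR : (Fintype.card G : ℝ)⁻¹ • ∑ g : G, φ g⁻¹ * R * φt g = D * R)
    (hRL : (Fintype.card G : ℝ)⁻¹ • ∑ g : G, φ g * (R * L) * φ g⁻¹ = D)
    (hΔ : ∀ g, Δ g = φt g - L * φ g * R) (h : G) :
    ∑ g : G, φ g⁻¹ * R * Δ (g * h) = 0 := by
  have step : ∑ g : G, φ g⁻¹ * R * Δ (g * h)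
      = ∑ g : G, φ h * (φ g⁻¹ * R * Δ g) := by
    refine Fintype.sum_equiv (Equiv.mulRight h) _ _ (fun g => ?_)
    simp only [Equiv.coe_mulRight, _root_.mul_inv_rev, _root_.map_mul]
    simp only [← mul_assoc]
    rw [← _root_.map_mul, mul_inv_cancel, _root_.map_one, one_mul]
  rw [step, ← Finset.mul_sum, aux_key1 φ φt L R D Δ hR hRL hΔ, mul_zero]

lemma aux_bracket
    (hR : (Fintype.card G : ℝ)⁻¹ • ∑ g : G, φ g⁻¹ * R * φt g = D * R)
    (hRL : (Fintype.card G : ℝ)⁻¹ • ∑ g : G, φ g * (R * L) * φ g⁻¹ = D)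
    (hΔ : ∀ g, Δ g = φt g - L * φ g * R) (m : ℕ) (h : G) :
    ∑ b : Fin m → G, ∑ g1 : G,
      φ g1⁻¹ * φ ((List.ofFn b).reverse.prod)⁻¹ * R *
        ((List.ofFn fun i => Δ (b i)).reverse.prod) * Δ (g1 * h) = 0 := by
  cases m with
  | zero =>
      simp only [List.ofFn_zero, List.reverse_nil, List.prod_nil, inv_one, _root_.map_one,
        mul_one, one_mul]
      exact Finset.sum_eq_zero fun b _ => aux_key2 φ φt L R D Δ hR hRL hΔ h
  | succ m' =>
      have hP : ∀ (x : G) (b' : Fin m' → G),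
          (List.ofFn ((Fin.snocEquiv fun _ : Fin (m' + 1) => G) (x, b'))).reverse.prod
            = x * (List.ofFn b').reverse.prod := by
        intro x b'
        rw [List.ofFn_succ']
        simp [List.reverse_concat, Fin.snocEquiv_apply]
      have hΔP : ∀ (x : G) (b' : Fin m' → G),
          (List.ofFn fun i => Δ ((Fin.snocEquiv fun _ : Fin (m' + 1) => G) (x, b') i)).reverse.prod
            = Δ x * (List.ofFn fun i => Δ (b' i)).reverse.prod := by
        intro x b'
        rw [List.ofFn_succ']
        simp [List.reverse_concat, Fin.snocEquiv_apply]
      rw [← Equiv.sum_comp (Fin.snocEquiv fun _ : Fin (m' + 1) => G), Fintype.sum_prod_type,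
        Finset.sum_comm]
      refine Finset.sum_eq_zero fun b' _ => ?_
      rw [Finset.sum_comm]
      refine Finset.sum_eq_zero fun g1 _ => ?_
      have step : ∀ x : G,
          φ g1⁻¹ * φ ((List.ofFn ((Fin.snocEquiv fun _ : Fin (m' + 1) => G) (x, b'))).reverse.prod)⁻¹ * R *
              ((List.ofFn fun i => Δ ((Fin.snocEquiv fun _ : Fin (m' + 1) => G) (x, b') i)).reverse.prod) *
              Δ (g1 * h)
            = (φ g1⁻¹ * φ ((List.ofFn b').reverse.prod)⁻¹) *
                ((φ x⁻¹ * R * Δ x) *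
                  (((List.ofFn fun i => Δ (b' i)).reverse.prod) * Δ (g1 * h))) := by
        intro x
        rw [hP, hΔP, _root_.mul_inv_rev, _root_.map_mul]
        simp only [mul_assoc]
      rw [Finset.sum_congr rfl fun x _ => step x, ← Finset.mul_sum, ← Finset.sum_mul,
        aux_key1 φ φt L R D Δ hR hRL hΔ, zero_mul, mul_zero]

end Aux

/-- With `L`, `R`, `D` as in the gate-dependent-noise eigenoperator
theorem and `Δ g := φt g − L * φ g * R`, for any `j ≥ 2` (here `j = j'' + 2`, with
`j''` gates `b` strictly between positions `2` and `j-1`, `k` gates `a` after position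
`j`, and first gate `g1` compiled with the character gate `ĥ`) the fully averaged
operator
`𝔼[φt(G_inv) φt(G_m) ⋯ φt(G_{j+1}) (L φ(G_j) R) Δ(G_{j-1}) ⋯ Δ(G_2) Δ(G_1 ĥ)]`
vanishes, where `G_inv = (G_m ⋯ G_1)⁻¹`. -/
theorem stmt_10 {n : ℕ} {G : Type*} [Group G] [Fintype G]
    (φ : G →* Matrix (Fin n) (Fin n) ℝ)
    (φt : G → Matrix (Fin n) (Fin n) ℝ)
    (L R D : Matrix (Fin n) (Fin n) ℝ)
    (hR : (Fintype.card G : ℝ)⁻¹ • ∑ g : G, φ g⁻¹ * R * φt g = D * R)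
    (hRL : (Fintype.card G : ℝ)⁻¹ • ∑ g : G, φ g * (R * L) * φ g⁻¹ = D)
    (hD : ∀ g, D * φ g = φ g * D)
    (Δ : G → Matrix (Fin n) (Fin n) ℝ)
    (hΔ : ∀ g, Δ g = φt g - L * φ g * R)
    (hgate : G) (k j'' : ℕ) :
    ((Fintype.card G : ℝ) ^ (k + j'' + 2))⁻¹ •
      (∑ a : Fin k → G, ∑ gj : G, ∑ b : Fin j'' → G, ∑ g1 : G,
        φt (((List.ofFn a).reverse.prod * gj * (List.ofFn b).reverse.prod * g1)⁻¹) *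
          ((List.ofFn fun i => φt (a i)).reverse.prod) *
          (L * φ gj * R) *
          ((List.ofFn fun i => Δ (b i)).reverse.prod) *
          Δ (g1 * hgate)) = 0 := by
  have hzero : (∑ a : Fin k → G, ∑ gj : G, ∑ b : Fin j'' → G, ∑ g1 : G,
      φt (((List.ofFn a).reverse.prod * gj * (List.ofFn b).reverse.prod * g1)⁻¹) *
        ((List.ofFn fun i => φt (a i)).reverse.prod) *
        (L * φ gj * R) *
        ((List.ofFn fun i => Δ (b i)).reverse.prod) *
        Δ (g1 * hgate)) = 0 := by
    refine Finset.sum_eq_zero fun a _ => ?_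
    rw [Finset.sum_comm]
    calc ∑ b : Fin j'' → G, ∑ gj : G, ∑ g1 : G,
          φt (((List.ofFn a).reverse.prod * gj * (List.ofFn b).reverse.prod * g1)⁻¹) *
            ((List.ofFn fun i => φt (a i)).reverse.prod) *
            (L * φ gj * R) *
            ((List.ofFn fun i => Δ (b i)).reverse.prod) *
            Δ (g1 * hgate)
        = ∑ b : Fin j'' → G, ∑ g1 : G,
            (∑ u : G, φt (((List.ofFn a).reverse.prod * u)⁻¹) *
                ((List.ofFn fun i => φt (a i)).reverse.prod) * (L * φ u)) *
              (φ g1⁻¹ * φ ((List.ofFn b).reverse.prod)⁻¹ * R *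
                ((List.ofFn fun i => Δ (b i)).reverse.prod) * Δ (g1 * hgate)) := by
          refine Finset.sum_congr rfl fun b _ => ?_
          rw [Finset.sum_comm]
          refine Finset.sum_congr rfl fun g1 _ => ?_
          rw [Finset.sum_mul]
          refine Eq.symm (Fintype.sum_equiv
            (Equiv.mulRight ((List.ofFn b).reverse.prod * g1)⁻¹) _ _ fun u => ?_)
          simp only [Equiv.coe_mulRight, _root_.mul_inv_rev, _root_.map_mul, mul_assoc,
            inv_mul_cancel_left, inv_mul_cancel, mul_one]
      _ = (∑ u : G, φt (((List.ofFn a).reverse.prod * u)⁻¹) *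
              ((List.ofFn fun i => φt (a i)).reverse.prod) * (L * φ u)) *
            (∑ b : Fin j'' → G, ∑ g1 : G,
              φ g1⁻¹ * φ ((List.ofFn b).reverse.prod)⁻¹ * R *
                ((List.ofFn fun i => Δ (b i)).reverse.prod) * Δ (g1 * hgate)) := by
          simp only [← Finset.mul_sum]
      _ = 0 := by
          rw [aux_bracket φ φt L R D Δ hR hRL hΔ j'' hgate, mul_zero]
  rw [hzero, smul_zero]
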